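/- Let λ_1 ≥ λ_2 ≥ ... ≥ λ_p ≥ 0 be real numbers with λ_1 > 0 and λ_l = 0 for all l > 1. Suppose (λ̂_n,i) are sequences with λ̂_n,1² = λ_1² + O(n^{-1/2}) and λ̂_n,l² = O(n^{-1}) for l ≥ 2, and let c_n = log(n)/n. Then (λ̂_n,2² + c_n)/(λ̂_n,1² + c_n) → 0 and (λ̂_n,l+1² + c_n)/(λ̂_n,l² + c_n) → 1 for each l ≥ 2, as n → ∞. Consequently, for all sufficiently large n, the index i minimizing (λ̂_n,i+1² + c_n)/(λ̂_n,i² + c_n) over 1 ≤ i ≤ p−1 equals 1. -/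

import Mathlib

open Filter Asymptotics

/-- Deterministic consistency of the MRER estimator under the null:
if the first eigenvalue estimate converges to a positive limit at rate `n^{-1/2}`
and the remaining squared eigenvalue estimates are `O(1/n)`, then with the ridge
`c n = log n / n`, the first eigenvalue ratio tends to `0`, the later ones tend to
`1`, and eventually the minimizing index is `1`. -/
theorem stmt_0 (p : ℕ) (hp : 2 ≤ p) (lam : ℕ → ℝ) (hat : ℕ → ℕ → ℝ)
    (hmono : ∀ i j, 1 ≤ i → i ≤ j → j ≤ p → lam j ≤ lam i)
    (hnonneg : ∀ i, 1 ≤ i → i ≤ p → 0 ≤ lam i)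
    (hlam1 : 0 < lam 1) (hlam0 : ∀ l, 2 ≤ l → l ≤ p → lam l = 0)
    (h1 : (fun n => hat n 1 ^ 2 - lam 1 ^ 2) =O[atTop] fun n : ℕ => (n : ℝ) ^ (-(1/2 : ℝ)))
    (h2 : ∀ l, 2 ≤ l → l ≤ p → (fun n => hat n l ^ 2) =O[atTop] fun n : ℕ => (n : ℝ)⁻¹)
    (c : ℕ → ℝ) (hc : ∀ n, c n = Real.log n / n) :
    Tendsto (fun n => (hat n 2 ^ 2 + c n) / (hat n 1 ^ 2 + c n)) atTop (nhds 0) ∧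
    (∀ l, 2 ≤ l → l + 1 ≤ p →
      Tendsto (fun n => (hat n (l + 1) ^ 2 + c n) / (hat n l ^ 2 + c n)) atTop (nhds 1)) ∧
    (∀ᶠ n in atTop, ∀ i, 2 ≤ i → i + 1 ≤ p →
      (hat n 2 ^ 2 + c n) / (hat n 1 ^ 2 + c n)
        < (hat n (i + 1) ^ 2 + c n) / (hat n i ^ 2 + c n)) := by
  have hcastTop : Tendsto (fun n : ℕ => (n : ℝ)) atTop atTop := tendsto_natCast_atTop_atTop
  have hlogTop : Tendsto (fun n : ℕ => Real.log n) atTop atTop :=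
    Real.tendsto_log_atTop.comp hcastTop
  have hcpos : ∀ᶠ n in atTop, 0 < c n := by
    filter_upwards [eventually_ge_atTop 2] with n hn
    rw [hc]
    have h2n : (2 : ℝ) ≤ n := by exact_mod_cast hn
    exact div_pos (Real.log_pos (by linarith)) (by linarith)
  have hc0 : Tendsto c atTop (nhds 0) := by
    have h := Real.isLittleO_log_id_atTop.tendsto_div_nhds_zero
    have h' := h.comp hcastTop
    have : c = fun n : ℕ => Real.log n / n := funext hc
    rw [this]
    exact h'
  -- hat n l ^ 2 / c n → 0 for 2 ≤ l ≤ p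
  have hA : ∀ l, 2 ≤ l → l ≤ p → Tendsto (fun n => hat n l ^ 2 / c n) atTop (nhds 0) := by
    intro l hl2 hlp
    obtain ⟨C, hC0, hC⟩ := (h2 l hl2 hlp).exists_pos
    rw [IsBigOWith] at hC
    apply squeeze_zero_norm' (a := fun n : ℕ => C / Real.log n)
    · filter_upwards [hC, eventually_ge_atTop 2] with n hn hn2
      have h2n : (2 : ℝ) ≤ n := by exact_mod_cast hn2
      have hnpos : (0 : ℝ) < n := by linarith
      have hlogpos : 0 < Real.log n := Real.log_pos (by linarith)
      have hcn : c n = Real.log n / n := hc n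
      have hcnpos : 0 < c n := by rw [hcn]; positivity
      have hsq : (0 : ℝ) ≤ hat n l ^ 2 := sq_nonneg _
      have hnorm : ‖hat n l ^ 2 / c n‖ = hat n l ^ 2 / c n := by
        rw [Real.norm_eq_abs, abs_of_nonneg (by positivity)]
      rw [hnorm]
      have hbound : hat n l ^ 2 ≤ C * (n : ℝ)⁻¹ := by
        have := hn
        rw [Real.norm_eq_abs, Real.norm_eq_abs, abs_of_nonneg hsq,
          abs_of_nonneg (by positivity : (0:ℝ) ≤ (n:ℝ)⁻¹)] at this
        exact this
      calc hat n l ^ 2 / c n ≤ C * (n : ℝ)⁻¹ / c n := by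
            exact (div_le_div_iff_of_pos_right hcnpos).2 hbound
        _ = C / Real.log n := by
            rw [hcn]; field_simp
    · have : Tendsto (fun n : ℕ => C * (Real.log n)⁻¹) atTop (nhds (C * 0)) :=
        (hlogTop.inv_tendsto_atTop).const_mul C
      simpa [div_eq_mul_inv] using this
  -- part 2
  have hB : ∀ l, 2 ≤ l → l + 1 ≤ p →
      Tendsto (fun n => (hat n (l + 1) ^ 2 + c n) / (hat n l ^ 2 + c n)) atTop (nhds 1) := by
    intro l hl hlp
    have t1 := hA (l + 1) (by omega) hlp
    have t2 := hA l hl (by omega)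
    have key : Tendsto (fun n => (hat n (l + 1) ^ 2 / c n + 1) / (hat n l ^ 2 / c n + 1))
        atTop (nhds 1) := by
      have := (t1.add (tendsto_const_nhds (x := (1:ℝ)))).div
        (t2.add (tendsto_const_nhds (x := (1:ℝ)))) (by norm_num)
      simpa [Pi.div_def] using this
    refine key.congr' ?_
    filter_upwards [hcpos] with n hpos
    have hb : (0 : ℝ) < hat n l ^ 2 + c n := by positivity
    have hcne : c n ≠ 0 := ne_of_gt hpos
    field_simp
  -- part 1
  have hb0 : Tendsto (fun n : ℕ => (n : ℝ) ^ (-(1/2 : ℝ))) atTop (nhds 0) :=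
    (tendsto_rpow_neg_atTop (by norm_num)).comp hcastTop
  have hdiff : Tendsto (fun n => hat n 1 ^ 2 - lam 1 ^ 2) atTop (nhds 0) :=
    h1.trans_tendsto hb0
  have hhat1 : Tendsto (fun n => hat n 1 ^ 2) atTop (nhds (lam 1 ^ 2)) := by
    have := hdiff.add_const (lam 1 ^ 2)
    simpa using this
  have hden : Tendsto (fun n => hat n 1 ^ 2 + c n) atTop (nhds (lam 1 ^ 2)) := by
    simpa using hhat1.add hc0
  have hnum : Tendsto (fun n => hat n 2 ^ 2 + c n) atTop (nhds 0) := by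
    have h20 : Tendsto (fun n => hat n 2 ^ 2) atTop (nhds 0) :=
      (h2 2 le_rfl hp).trans_tendsto tendsto_inv_atTop_nhds_zero_nat
    simpa using h20.add hc0
  have part1 : Tendsto (fun n => (hat n 2 ^ 2 + c n) / (hat n 1 ^ 2 + c n)) atTop (nhds 0) := by
    have := hnum.div hden (ne_of_gt (pow_pos hlam1 2))
    simpa [Pi.div_def] using this
  refine ⟨part1, hB, ?_⟩
  have hsmall : ∀ᶠ n in atTop, (hat n 2 ^ 2 + c n) / (hat n 1 ^ 2 + c n) < 1 / 2 :=
    part1.eventually_lt_const (by norm_num)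
  have hall : ∀ᶠ n in atTop, ∀ i ∈ Finset.Icc 2 p, 2 ≤ i → i + 1 ≤ p →
      1 / 2 < (hat n (i + 1) ^ 2 + c n) / (hat n i ^ 2 + c n) := by
    rw [Filter.eventually_all_finset]
    intro i _
    by_cases hi2 : 2 ≤ i
    · by_cases hip : i + 1 ≤ p
      · filter_upwards [(hB i hi2 hip).eventually_const_lt (show (1:ℝ)/2 < 1 by norm_num)]
          with n hn
        intro _ _; exact hn
      · filter_upwards with n; intro _ h; exact absurd h hip
    · filter_upwards with n; intro h; exact absurd h hi2
  filter_upwards [hsmall, hall] with n h1' h2'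
  intro i hi hip
  exact lt_trans h1' (h2' i (Finset.mem_Icc.2 ⟨hi, by omega⟩) hi hip)
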